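/- arXiv:2202.11617 — 4 statements merged into one kernel-verified Lean document; each statement's English description precedes it below -/
import Mathlib

section
/- Let A_1, ..., A_k be n×n real matrices and let 1 ≤ r < k. Suppose there are scalars t_1, ..., t_k ∈ ℝ such that the matrix ∑_{i=1}^k t_i A_i has rank at least r. Then there is a subset I ⊆ {1, ..., k} with |I| ≤ r and scalars t'_i (i ∈ I) such that ∑_{i ∈ I} t'_i A_i has rank at least r. -/
open Matrix

lemma fullRankIsUnitDet {r : ℕ} (G : Matrix (Fin r) (Fin r) ℝ) (h : r ≤ G.rank) :
    G.det ≠ 0 := by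
  have hle : G.rank = r := le_antisymm (G.rank_le_card_width.trans (by simp)) h
  have : LinearMap.range G.mulVecLin = ⊤ := by
    apply Submodule.eq_top_of_finrank_eq
    simpa [Matrix.rank] using hle
  have hsurj : Function.Surjective G.mulVec := by
    intro y; have := this ▸ Submodule.mem_top (x := y) (R := ℝ); obtain ⟨v, hv⟩ := this; exact ⟨v, hv⟩
  have := Matrix.mulVec_surjective_iff_isUnit.mp hsurj
  exact (Matrix.isUnit_iff_isUnit_det G).mp this |>.ne_zero

lemma existsBC {n r : ℕ} (M : Matrix (Fin n) (Fin n) ℝ) (h : r ≤ M.rank) :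
    ∃ (B : Matrix (Fin r) (Fin n) ℝ) (C : Matrix (Fin n) (Fin r) ℝ), (B * M * C).det ≠ 0 := by
  have h' : r ≤ Module.finrank ℝ (LinearMap.range M.mulVecLin) := h
  obtain ⟨w, hw⟩ := exists_linearIndependent_of_le_finrank h'
  choose x hx using fun j => (w j).2
  set C : Matrix (Fin n) (Fin r) ℝ := Matrix.of fun i j => x j i with hC
  set N := M * C with hN
  have hcol : ∀ j, N.mulVec (Pi.single j 1) = (w j : Fin n → ℝ) := by
    intro j
    have h1 : C.mulVec (Pi.single j 1) = x j := by
      ext i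
      simp [Matrix.mulVec_single, hC]
    rw [hN, ← Matrix.mulVec_mulVec, h1]; exact hx j
  have hrankN : r ≤ N.rank := by
    have hmem : ∀ j, (w j : Fin n → ℝ) ∈ LinearMap.range N.mulVecLin := by
      intro j; exact ⟨Pi.single j 1, hcol j⟩
    have hindep : LinearIndependent ℝ (fun j => (w j : Fin n → ℝ)) :=
      hw.map' (Submodule.subtype _) (Submodule.ker_subtype _)
    have h1 : Submodule.span ℝ (Set.range fun j => (w j : Fin n → ℝ)) ≤
        LinearMap.range N.mulVecLin := by
      rw [Submodule.span_le]; rintro _ ⟨j, rfl⟩; exact hmem j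
    calc r = Module.finrank ℝ (Submodule.span ℝ (Set.range fun j => (w j : Fin n → ℝ))) := by
            rw [finrank_span_eq_card hindep]; simp
      _ ≤ Module.finrank ℝ (LinearMap.range N.mulVecLin) := Submodule.finrank_mono h1
  refine ⟨Nᵀ, C, ?_⟩
  have : Nᵀ * M * C = Nᵀ * N := by rw [hN, Matrix.mul_assoc]
  rw [this]
  apply fullRankIsUnitDet
  rwa [Matrix.rank_transpose_mul_self]

open MvPolynomial in
lemma restrictPoly {k : ℕ} (P : MvPolynomial (Fin k) ℝ) (m : Fin k →₀ ℕ)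
    (hm : coeff m P ≠ 0) :
    ∃ t : Fin k → ℝ, (∀ i ∉ m.support, t i = 0) ∧ eval t P ≠ 0 := by
  classical
  set σ : Fin k → MvPolynomial (Fin k) ℝ := fun i => if i ∈ m.support then X i else 0 with hσ
  set R := bind₁ σ P with hR
  have key : ∀ (m' : Fin k →₀ ℕ) (c : ℝ), m'.support ⊆ m.support →
      bind₁ σ (monomial m' c) = monomial m' c := by
    intro m' c hsub
    rw [bind₁_monomial, monomial_eq, Finsupp.prod]
    congr 1
    exact Finset.prod_congr rfl fun i hi => by rw [hσ]; simp [hsub hi]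
  have key0 : ∀ (m' : Fin k →₀ ℕ) (c : ℝ), ¬ m'.support ⊆ m.support →
      bind₁ σ (monomial m' c) = 0 := by
    intro m' c hsub
    obtain ⟨i, hi, hni⟩ := Finset.not_subset.mp hsub
    rw [bind₁_monomial]
    have : σ i ^ m' i = 0 := by
      rw [hσ]; simp only [if_neg hni]
      exact zero_pow (Finsupp.mem_support_iff.mp hi)
    rw [Finset.prod_eq_zero hi this, mul_zero]
  have hcoeff : coeff m R = coeff m P := by
    conv_lhs => rw [hR, P.as_sum, map_sum]
    rw [coeff_sum, Finset.sum_eq_single m]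
    · rw [key m _ (subset_refl _), coeff_monomial, if_pos rfl]
    · intro m' hm' hne
      by_cases hsub : m'.support ⊆ m.support
      · rw [key m' _ hsub, coeff_monomial, if_neg hne]
      · rw [key0 m' _ hsub, coeff_zero]
    · intro hms; simp [MvPolynomial.mem_support_iff, hm] at hms
  have hRne : R ≠ 0 := fun h0 => hm (by rw [← hcoeff, h0, coeff_zero])
  have hex : ∃ t : Fin k → ℝ, eval t R ≠ 0 := by
    by_contra hc
    push_neg at hc
    exact hRne (MvPolynomial.funext fun x => by rw [hc x, map_zero])
  obtain ⟨t, ht⟩ := hex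
  refine ⟨fun i => if i ∈ m.support then t i else 0, fun i hi => if_neg hi, ?_⟩
  have heq : eval t R = eval (fun i => if i ∈ m.support then t i else 0) P := by
    rw [hR]
    have := eval₂Hom_bind₁ (RingHom.id ℝ) t σ P
    have h2 : (fun i => eval t (σ i)) = fun i => if i ∈ m.support then t i else 0 := by
      funext i
      rw [hσ]
      by_cases hi : i ∈ m.support <;> simp [hi]
    rw [show eval t = eval₂Hom (RingHom.id ℝ) t from rfl, this,
      show (eval₂Hom (RingHom.id ℝ) fun i => (eval₂Hom (RingHom.id ℝ) t) (σ i))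
        = eval (fun i => eval t (σ i)) from rfl, h2]
  rwa [heq] at ht

open MvPolynomial in
lemma detPoly {k r : ℕ} (D : Fin k → Matrix (Fin r) (Fin r) ℝ) :
    ∀ t : Fin k → ℝ,
      eval t (Matrix.of fun a b : Fin r => ∑ i, MvPolynomial.C (D i a b) * X i).det
        = (∑ i, t i • D i).det := by
  intro t
  rw [RingHom.map_det]
  congr 1
  ext a b
  simp [Matrix.sum_apply, mul_comm]

open MvPolynomial in
lemma detPolyDeg {k r : ℕ} (D : Fin k → Matrix (Fin r) (Fin r) ℝ) :
    (Matrix.of fun a b : Fin r => ∑ i, MvPolynomial.C (D i a b) * X i).det.totalDegree ≤ r := by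
  rw [Matrix.det_apply]
  apply (totalDegree_finset_sum _ _).trans
  apply Finset.sup_le
  intro σ _
  apply (totalDegree_smul_le _ _).trans
  apply (totalDegree_finset_prod _ _).trans
  have hentry : ∀ a b : Fin r,
      ((Matrix.of fun a b : Fin r => ∑ i, MvPolynomial.C (D i a b) * X i) a b).totalDegree ≤ 1 := by
    intro a b
    rw [Matrix.of_apply]
    apply (totalDegree_finset_sum _ _).trans
    apply Finset.sup_le
    intro i _
    apply (totalDegree_mul _ _).trans
    simp [totalDegree_C, totalDegree_X]
  refine le_trans (Finset.sum_le_sum (f := fun i : Fin r =>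
      ((Matrix.of fun a b : Fin r => ∑ i, MvPolynomial.C (D i a b) * X i) (σ i) i).totalDegree)
      (g := fun _ : Fin r => 1) (fun i _ => hentry (σ i) i)) (by simp)

lemma rankFromDet {n r : ℕ} (B : Matrix (Fin r) (Fin n) ℝ) (C : Matrix (Fin n) (Fin r) ℝ)
    (S : Matrix (Fin n) (Fin n) ℝ) (h : (B * S * C).det ≠ 0) : r ≤ S.rank := by
  have hu : IsUnit (B * S * C) := (Matrix.isUnit_iff_isUnit_det _).mpr (isUnit_iff_ne_zero.mpr h)
  have h1 : (B * S * C).rank = r := by rw [Matrix.rank_of_isUnit _ hu]; simp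
  calc r = (B * S * C).rank := h1.symm
    _ ≤ (B * S).rank := Matrix.rank_mul_le_left _ _
    _ ≤ S.rank := Matrix.rank_mul_le_right _ _

/-- If some linear combination of `A 1, …, A k` has rank at least `r < k`,
then some linear combination of at most `r` of the matrices has rank at least `r`. -/
theorem stmt0 {n k r : ℕ} (A : Fin k → Matrix (Fin n) (Fin n) ℝ)
    (hr : 1 ≤ r) (hrk : r < k) (t : Fin k → ℝ)
    (h : r ≤ (∑ i, t i • A i).rank) :
    ∃ (I : Finset (Fin k)) (t' : Fin k → ℝ),
      I.card ≤ r ∧ r ≤ (∑ i ∈ I, t' i • A i).rank := by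
  classical
  obtain ⟨B, C, hBC⟩ := existsBC _ h
  set D : Fin k → Matrix (Fin r) (Fin r) ℝ := fun i => B * A i * C with hD
  have hlin : ∀ s : Fin k → ℝ, B * (∑ i, s i • A i) * C = ∑ i, s i • D i := by
    intro s
    rw [Matrix.mul_sum, Matrix.sum_mul]
    refine Finset.sum_congr rfl fun i _ => ?_
    rw [hD]
    simp [Matrix.mul_smul, Matrix.smul_mul]
  set P := (Matrix.of fun a b : Fin r => ∑ i, MvPolynomial.C (D i a b) * MvPolynomial.X i).det
    with hP
  have hPt : MvPolynomial.eval t P ≠ 0 := by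
    rw [hP, detPoly D t, ← hlin t]
    exact hBC
  have hPne : P ≠ 0 := fun h0 => hPt (by rw [h0, map_zero])
  obtain ⟨m, hmmem⟩ := Finset.nonempty_iff_ne_empty.mpr
    (fun he => hPne (MvPolynomial.support_eq_empty.mp he))
  have hmc : MvPolynomial.coeff m P ≠ 0 := MvPolynomial.mem_support_iff.mp hmmem
  have hcard : m.support.card ≤ r := by
    calc m.support.card = ∑ i ∈ m.support, 1 := by simp
      _ ≤ ∑ i ∈ m.support, m i := Finset.sum_le_sum fun i hi =>
          Nat.one_le_iff_ne_zero.mpr (Finsupp.mem_support_iff.mp hi)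
      _ = m.sum fun _ e => e := rfl
      _ ≤ P.totalDegree := MvPolynomial.le_totalDegree hmmem
      _ ≤ r := detPolyDeg D
  obtain ⟨t', ht'0, ht'⟩ := restrictPoly P m hmc
  refine ⟨m.support, t', hcard, ?_⟩
  have hsum : ∑ i ∈ m.support, t' i • A i = ∑ i, t' i • A i := by
    apply Finset.sum_subset (Finset.subset_univ _)
    intro i _ hi
    rw [ht'0 i hi, zero_smul]
  rw [hsum]
  apply rankFromDet B C
  rw [hlin t', ← detPoly D t']
  exact ht'
end

section
/- Let A_1, ..., A_k be k×k real matrices and suppose there are scalars t_1, ..., t_k ∈ ℝ such that ∑_{i=1}^k t_i A_i is nonsingular. Then either there is a proper subset I ⊊ {1, ..., k} and scalars t'_i (i ∈ I) such that ∑_{i ∈ I} t'_i A_i is nonsingular, or the polynomial det(∑_{i=1}^k x_i A_i) ∈ ℝ[x_1, ..., x_k] equals α·x_1·x_2···x_k for some α ∈ ℝ. -/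
section Aux
open MvPolynomial

/-- If a polynomial over ℝ vanishes whenever the `j`-th coordinate is `0`,
then every monomial in its support involves the variable `j`. -/
lemma supp_pos_of_vanish {σ : Type*} [Fintype σ] [DecidableEq σ]
    {p : MvPolynomial σ ℝ} {j : σ}
    (hp : ∀ x : σ → ℝ, x j = 0 → eval x p = 0) :
    ∀ m ∈ p.support, m j ≠ 0 := by
  set r := p.modMonomial (Finsupp.single j 1) with hr
  have hsupp : ∀ m ∈ r.support, m j = 0 := by
    intro m hm
    by_contra hmj
    have hle : Finsupp.single j 1 ≤ m := by
      rw [Finsupp.single_le_iff]; omega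
    have := coeff_modMonomial_of_le (s' := m) (s := Finsupp.single j 1) p hle
    rw [← hr] at this
    exact (MvPolynomial.mem_support_iff.mp hm) this
  have hdecomp := divMonomial_add_modMonomial p (Finsupp.single j 1)
  have heval0 : ∀ y : σ → ℝ, y j = 0 → eval y r = 0 := by
    intro y hy
    have := congrArg (eval y) hdecomp
    rw [map_add, map_mul, eval_monomial] at this
    rw [Finsupp.prod_single_index (by simp), pow_one, hy, one_mul, zero_mul, zero_add] at this
    rw [← hr] at this
    rw [this]
    exact hp y hy
  have hindep : ∀ x : σ → ℝ, eval x r = eval (Function.update x j 0) r := by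
    intro x
    rw [eval_eq, eval_eq]
    refine Finset.sum_congr rfl fun d hd => ?_
    congr 1
    refine Finset.prod_congr rfl fun i _ => ?_
    rcases eq_or_ne i j with rfl | hij
    · rw [hsupp d hd, pow_zero, pow_zero]
    · rw [Function.update_of_ne hij]
  have hr0 : r = 0 := by
    apply MvPolynomial.funext
    intro x
    rw [map_zero, hindep x]
    exact heval0 _ (Function.update_self j 0 x)
  intro m hm hmj
  have hnle : ¬ Finsupp.single j 1 ≤ m := by
    rw [Finsupp.single_le_iff]; omega
  have := coeff_modMonomial_of_not_le (s' := m) (s := Finsupp.single j 1) p hnle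
  rw [← hr, hr0] at this
  exact (MvPolynomial.mem_support_iff.mp hm) this.symm

end Aux

open MvPolynomial in
/-- If some linear combination of the `k × k` matrices `A 1, …, A k` is
nonsingular, then either a linear combination of a proper subset of them is nonsingular,
or `det (∑ xᵢ Aᵢ)` is the monomial `α · x₁ ⋯ x_k`. -/
theorem stmt1 {k : ℕ} (A : Fin k → Matrix (Fin k) (Fin k) ℝ) (t : Fin k → ℝ)
    (h : (∑ i, t i • A i).det ≠ 0) :
    (∃ (I : Finset (Fin k)) (t' : Fin k → ℝ),
        I ⊂ Finset.univ ∧ (∑ i ∈ I, t' i • A i).det ≠ 0) ∨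
      ∃ α : ℝ,
        (Matrix.of fun a b => ∑ i, X i * C (A i a b) :
            Matrix (Fin k) (Fin k) (MvPolynomial (Fin k) ℝ)).det
          = C α * ∏ i, X i := by
  classical
  by_cases hI : ∃ (I : Finset (Fin k)) (t' : Fin k → ℝ),
      I ⊂ Finset.univ ∧ (∑ i ∈ I, t' i • A i).det ≠ 0
  · exact Or.inl hI
  right
  push_neg at hI
  set M : Matrix (Fin k) (Fin k) (MvPolynomial (Fin k) ℝ) :=
    Matrix.of fun a b => ∑ i, X i * C (A i a b) with hM
  set P := M.det with hP
  -- evaluation of P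
  have heval : ∀ x : Fin k → ℝ, eval x P = (∑ i, x i • A i).det := by
    intro x
    rw [hP, RingHom.map_det]
    congr 1
    ext a b
    simp [hM, Matrix.sum_apply]
  -- vanishing on hyperplanes
  have hvan : ∀ (j : Fin k) (x : Fin k → ℝ), x j = 0 → eval x P = 0 := by
    intro j x hx
    rw [heval]
    have hsum : ∑ i, x i • A i = ∑ i ∈ Finset.univ.erase j, x i • A i := by
      rw [← Finset.add_sum_erase _ _ (Finset.mem_univ j), hx, zero_smul, zero_add]
    rw [hsum]
    exact hI _ x (Finset.erase_ssubset (Finset.mem_univ j))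
  have hsuppP : ∀ m ∈ P.support, ∀ j : Fin k, m j ≠ 0 := fun m hm j =>
    supp_pos_of_vanish (hvan j) m hm
  -- total degree bound
  have hdeg : P.totalDegree ≤ k := by
    rw [hP, Matrix.det_apply]
    refine le_trans (totalDegree_finset_sum _ _) (Finset.sup_le fun σ _ => ?_)
    refine le_trans (totalDegree_smul_le _ _) ?_
    refine le_trans (totalDegree_finset_prod _ _) ?_
    calc ∑ i, (M (σ i) i).totalDegree ≤ ∑ _i : Fin k, 1 := by
          refine Finset.sum_le_sum fun i _ => ?_
          rw [hM, Matrix.of_apply]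
          refine le_trans (totalDegree_finset_sum _ _) (Finset.sup_le fun l _ => ?_)
          refine le_trans (totalDegree_mul _ _) ?_
          simp [totalDegree_X, totalDegree_C]
      _ = k := by simp
  -- the full monomial
  set d : Fin k →₀ ℕ := ∑ j, Finsupp.single j 1 with hd
  have hdj : ∀ j, d j = 1 := by
    intro j
    simp [hd, Finsupp.finset_sum_apply, Finsupp.single_apply]
  have hmod : P.modMonomial d = 0 := by
    ext m
    by_cases hle : d ≤ m
    · rw [coeff_modMonomial_of_le P hle, coeff_zero]
    · rw [coeff_modMonomial_of_not_le P hle, coeff_zero]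
      by_contra hc
      rw [Finsupp.le_def] at hle
      push_neg at hle
      obtain ⟨j, hj⟩ := hle
      rw [hdj j] at hj
      exact hsuppP m (MvPolynomial.mem_support_iff.mpr hc) j (by omega)
  set Q := P.divMonomial d with hQ
  have hfact : (monomial d) 1 * Q = P := by
    have := divMonomial_add_modMonomial P d
    rwa [hmod, add_zero] at this
  have hsum_eq : ∀ s : Fin k →₀ ℕ, (s.sum fun _ e => e) = ∑ j, s j := fun s =>
    Finsupp.sum_fintype _ _ (fun _ => rfl)
  have hQsupp : ∀ m ∈ Q.support, m = 0 := by
    intro m hm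
    have hcm : coeff m Q = coeff (d + m) P := coeff_divMonomial d P m
    have hdm : d + m ∈ P.support := by
      rw [MvPolynomial.mem_support_iff, ← hcm]
      exact MvPolynomial.mem_support_iff.mp hm
    have h1 : ((d + m).sum fun _ e => e) ≤ k := le_trans (le_totalDegree hdm) hdeg
    rw [hsum_eq] at h1
    have h2 : ∑ j, (d + m) j = ∑ j, d j + ∑ j, m j := by
      simp [Finsupp.add_apply, Finset.sum_add_distrib]
    have h3 : ∑ j : Fin k, d j = k := by simp [hdj]
    have h4 : ∑ j, m j = 0 := by omega
    ext j
    have := (Finset.sum_eq_zero_iff.mp h4) j (Finset.mem_univ j)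
    simpa using this
  have hQC : Q = C (coeff 0 Q) := by
    ext n
    rcases eq_or_ne n 0 with rfl | hn
    · simp
    · rw [coeff_C, if_neg (Ne.symm hn)]
      by_contra hc
      exact hn (hQsupp n (MvPolynomial.mem_support_iff.mpr hc))
  refine ⟨coeff 0 Q, ?_⟩
  have hprod : ∏ i : Fin k, X i = (monomial d) (1 : ℝ) := by
    rw [← prod_X_pow_eq_monomial]
    have hsupp : d.support = Finset.univ := by
      ext j; simp [Finsupp.mem_support_iff, hdj j]
    rw [hsupp]
    exact Finset.prod_congr rfl fun j _ => by rw [hdj j, pow_one]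
  rw [← hfact, hprod, mul_comm]
  exact congrArg (fun z => z * (monomial d) 1) hQC
end

section
/- Let G = (V, E) be a graph realized in ℝ^d by a map p : V → ℝ^d, let ω : E → ℝ be an equilibrium stress of (G, p), and let Ω be the associated stress matrix. If rank(Ω) = 1, then the support of ω (the set of edges e with ω(e) ≠ 0) induces a complete subgraph of G. -/
/-- If a framework `(G, p)` in `ℝ^d` has an equilibrium stress `ω` whose
associated stress matrix has rank `1`, then the support of `ω` induces a complete
subgraph of `G`: any two distinct vertices incident to edges of the support are
joined by an edge of the support. -/
theorem stmt5 {V : Type*} [Fintype V] [DecidableEq V] (d : ℕ)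
    (G : SimpleGraph V) (p : V → Fin d → ℝ) (ω : V → V → ℝ)
    (hsym : ∀ u v, ω u v = ω v u)
    (hsupp : ∀ u v, ¬ G.Adj u v → ω u v = 0)
    (hstress : ∀ u, ∀ i : Fin d, ∑ v, ω u v * (p u i - p v i) = 0)
    (hrank : (Matrix.of fun u v : V =>
        if u = v then ∑ w, ω u w else -ω u v).rank = 1) :
    ∀ u v w x : V, ω u v ≠ 0 → ω w x ≠ 0 → u ≠ w →
      G.Adj u w ∧ ω u w ≠ 0 := by
  intro u v w x huv hwx huw
  set A : Matrix V V ℝ := Matrix.of fun u v : V =>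
      if u = v then ∑ w, ω u w else -ω u v with hA
  -- diagonal of ω vanishes
  have hdiag : ∀ a : V, ω a a = 0 := fun a => hsupp a a (G.irrefl)
  -- the matrix is symmetric
  have hAsym : ∀ a b : V, A a b = A b a := by
    intro a b
    by_cases h : a = b
    · subst h; rfl
    · simp only [hA, Matrix.of_apply, if_neg h, if_neg (Ne.symm h), hsym]
  -- rank one: columns are multiples of a fixed vector y
  rw [Matrix.rank] at hrank
  rw [finrank_eq_one_iff' ] at hrank
  obtain ⟨⟨y, hymem⟩, hy0, hy⟩ := hrank
  have hy0' : y ≠ 0 := fun h => hy0 (Subtype.ext h)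
  -- each column of A is in the range
  have hcol : ∀ b : V, ∃ c : ℝ, ∀ a : V, A a b = c * y a := by
    intro b
    have hmem : (fun a => A a b) ∈ LinearMap.range A.mulVecLin := by
      refine ⟨Pi.single b 1, ?_⟩
      ext a
      simp [Matrix.mulVecLin, Matrix.mulVec, dotProduct, Pi.single_apply,
        mul_comm]
    obtain ⟨c, hc⟩ := hy ⟨_, hmem⟩
    exact ⟨c, fun a => by
      have := congrFun (congrArg Subtype.val hc) a
      simpa [eq_comm] using this.symm⟩
  choose c hc using hcol
  -- off-diagonal entries
  have hoff : ∀ a b : V, a ≠ b → A a b = -ω a b := by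
    intro a b hab; simp [hA, if_neg hab]
  have hvu : v ≠ u := fun h => huv (h ▸ hdiag u)
  have hxw : x ≠ w := fun h => hwx (h ▸ hdiag w)
  -- A u v ≠ 0 : c v ≠ 0 and y u ≠ 0
  have hAuv : A u v ≠ 0 := by rw [hoff u v (Ne.symm hvu)]; simpa using huv
  have hAwx : A w x ≠ 0 := by rw [hoff w x (Ne.symm hxw)]; simpa using hwx
  rw [hc v u] at hAuv
  rw [hc x w] at hAwx
  have hyu : y u ≠ 0 := fun h => hAuv (by rw [h, mul_zero])
  have hcx : c x ≠ 0 := fun h => hAwx (by rw [h, zero_mul])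
  have hyw : y w ≠ 0 := fun h => hAwx (by rw [h, mul_zero])
  -- from symmetry: A x w = A w x ≠ 0, so c w * y x ≠ 0, in particular c w ≠ 0
  have hAxw : A x w ≠ 0 := by rw [hAsym x w]; rw [hc x w]; exact hAwx
  rw [hc w x] at hAxw
  have hcw : c w ≠ 0 := fun h => hAxw (by rw [h, zero_mul])
  -- conclude A u w ≠ 0
  have hAuw : A u w ≠ 0 := by
    rw [hc w u]; exact mul_ne_zero hcw hyu
  rw [hoff u w huw] at hAuw
  have hωuw : ω u w ≠ 0 := fun h => hAuw (by rw [h, neg_zero])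
  refine ⟨?_, hωuw⟩
  by_contra h
  exact hωuw (hsupp u w h)
end

section
/- Define grn(G) as the largest d such that G has a globally rigid subgraph in ℝ^d on at least d+2 vertices (or 0 if none exists). Assume that every d(d+1)-connected graph is rigid in ℝ^d (the Lovász–Yemini conjecture) and that every (d(d+1)+1)-connected graph is globally rigid in ℝ^d. Then for every graph G = (V, E), grn(G) ≥ ⌊√(|E| / (6|V|))⌋. -/
/-- Squared Euclidean distance between two points of `ℝ^d`. -/
def sqDist {d : ℕ} (x y : Fin d → ℝ) : ℝ := ∑ i, (x i - y i) ^ 2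

/-- Two realizations of `G` in `ℝ^d` are equivalent if corresponding edge lengths agree. -/
def FrameworkEquiv {V : Type*} (d : ℕ) (G : SimpleGraph V) (p q : V → Fin d → ℝ) : Prop :=
  ∀ u v : V, G.Adj u v → sqDist (p u) (p v) = sqDist (q u) (q v)

/-- Two realizations are congruent if all pairwise distances agree. -/
def FrameworkCongr {V : Type*} (d : ℕ) (p q : V → Fin d → ℝ) : Prop :=
  ∀ u v : V, sqDist (p u) (p v) = sqDist (q u) (q v)

/-- A realization is generic if the set of all coordinates of its points is
algebraically independent over `ℚ`. -/
def Generic {V : Type*} (d : ℕ) (p : V → Fin d → ℝ) : Prop :=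
  AlgebraicIndependent ℚ (fun vi : V × Fin d => p vi.1 vi.2)

/-- A graph is globally rigid in `ℝ^d` if every generic realization in `ℝ^d` is
determined up to congruence by its edge lengths. -/
def GloballyRigid {V : Type*} (d : ℕ) (G : SimpleGraph V) : Prop :=
  ∀ p : V → Fin d → ℝ, Generic d p →
    ∀ q : V → Fin d → ℝ, FrameworkEquiv d G p q → FrameworkCongr d p q

/-- A graph is minimally globally rigid in `ℝ^d` if it is globally rigid in `ℝ^d`
but deleting any edge destroys global rigidity. -/
def MinimallyGloballyRigid {V : Type*} (d : ℕ) (G : SimpleGraph V) : Prop :=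
  GloballyRigid d G ∧
    ∀ e ∈ G.edgeSet, ¬ GloballyRigid d (G.deleteEdges {e})

/-- A graph is `k`-connected if it has more than `k` vertices and remains connected
after deleting any set of fewer than `k` vertices. -/
def KConnected {V : Type*} (k : ℕ) (G : SimpleGraph V) : Prop :=
  k + 1 ≤ Nat.card V ∧
    ∀ S : Set V, S.ncard < k → (G.induce Sᶜ).Connected

/-- A graph is rigid in `ℝ^d` if every generic realization is locally determined up to
congruence by its edge lengths. -/
def Rigid {V : Type*} (d : ℕ) (G : SimpleGraph V) : Prop :=
  ∀ p : V → Fin d → ℝ, Generic d p →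
    ∃ ε > (0 : ℝ), ∀ q : V → Fin d → ℝ, FrameworkEquiv d G p q →
      (∀ v : V, sqDist (p v) (q v) < ε) → FrameworkCongr d p q

/-- `grn G` is the largest `d` such that `G` has a globally rigid subgraph in `ℝ^d`
on at least `d + 2` vertices (and `0` if there is no such `d`). -/
noncomputable def grn {V : Type} (G : SimpleGraph V) : ℕ :=
  sSup {d : ℕ | ∃ (U : Set V) (H : SimpleGraph U),
    H ≤ G.induce U ∧ d + 2 ≤ U.ncard ∧ GloballyRigid d H}




section E2
variable {V : Type} [DecidableEq V] (G : SimpleGraph V) [DecidableRel G.Adj]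

/-- number of ordered adjacent pairs inside `s` -/
def E2 (s : Finset V) : ℕ := ((s ×ˢ s).filter fun p => G.Adj p.1 p.2).card

lemma E2_le (s : Finset V) : E2 G s ≤ s.card * (s.card - 1) := by
  classical
  have hsub : ((s ×ˢ s).filter fun p => G.Adj p.1 p.2) ⊆
      (s ×ˢ s) \ s.image (fun x => (x, x)) := by
    intro p hp
    simp only [Finset.mem_filter, Finset.mem_product] at hp
    simp only [Finset.mem_sdiff, Finset.mem_product, Finset.mem_image]
    refine ⟨⟨hp.1.1, hp.1.2⟩, ?_⟩
    rintro ⟨x, hx, rfl⟩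
    exact G.irrefl hp.2
  have hdiag : s.image (fun x => (x, x)) ⊆ s ×ˢ s := by
    intro p hp
    simp only [Finset.mem_image] at hp
    obtain ⟨x, hx, rfl⟩ := hp
    simp [hx]
  have hcard : (s.image (fun x => (x, x))).card = s.card :=
    Finset.card_image_of_injective _ (fun a b h => (Prod.mk.injEq _ _ _ _).mp h |>.1)
  calc E2 G s ≤ ((s ×ˢ s) \ s.image (fun x => (x, x))).card := Finset.card_le_card hsub
    _ = s.card * s.card - s.card := by
        rw [Finset.card_sdiff_of_subset hdiag, Finset.card_product, hcard]
    _ = s.card * (s.card - 1) := by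
        cases s.card with
        | zero => simp
        | succ n => simp [Nat.succ_sub_one]; ring_nf; omega

lemma E2_erase (s : Finset V) (v : V) :
    E2 G s ≤ E2 G (s.erase v) + 2 * (s.filter (G.Adj v)).card := by
  classical
  set D := s.filter (G.Adj v) with hD
  have hsub : ((s ×ˢ s).filter fun p => G.Adj p.1 p.2) ⊆
      (((s.erase v) ×ˢ (s.erase v)).filter fun p => G.Adj p.1 p.2)
        ∪ D.image (fun u => (v, u)) ∪ D.image (fun u => (u, v)) := by
    intro p hp
    simp only [Finset.mem_filter, Finset.mem_product] at hp
    obtain ⟨⟨h1, h2⟩, hadj⟩ := hp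
    simp only [Finset.mem_union, Finset.mem_filter, Finset.mem_product, Finset.mem_image,
      Finset.mem_erase, hD]
    by_cases e1 : p.1 = v
    · exact Or.inl (Or.inr ⟨p.2, ⟨h2, e1 ▸ hadj⟩, by rw [← e1]⟩)
    by_cases e2 : p.2 = v
    · exact Or.inr ⟨p.1, ⟨h1, (e2 ▸ hadj).symm⟩, by rw [← e2]⟩
    · exact Or.inl (Or.inl ⟨⟨⟨e1, h1⟩, ⟨e2, h2⟩⟩, hadj⟩)
  calc E2 G s ≤ _ := Finset.card_le_card hsub
    _ ≤ E2 G (s.erase v) + D.card + D.card := by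
        refine le_trans (Finset.card_union_le _ _) ?_
        have h1 : (D.image (fun u => (v, u))).card ≤ D.card := Finset.card_image_le
        have h2 : (D.image (fun u => (u, v))).card ≤ D.card := Finset.card_image_le
        have h3 := Finset.card_union_le
          (((s.erase v) ×ˢ (s.erase v)).filter fun p : V × V => G.Adj p.1 p.2)
          (D.image (fun u => (v, u)))
        unfold E2
        omega
    _ = E2 G (s.erase v) + 2 * D.card := by ring

lemma E2_split (s s1 s2 : Finset V)
    (h : ∀ x ∈ s, ∀ y ∈ s, G.Adj x y → (x ∈ s1 ∧ y ∈ s1) ∨ (x ∈ s2 ∧ y ∈ s2)) :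
    E2 G s ≤ E2 G s1 + E2 G s2 := by
  classical
  have hsub : ((s ×ˢ s).filter fun p => G.Adj p.1 p.2) ⊆
      ((s1 ×ˢ s1).filter fun p => G.Adj p.1 p.2) ∪
      ((s2 ×ˢ s2).filter fun p => G.Adj p.1 p.2) := by
    intro p hp
    simp only [Finset.mem_filter, Finset.mem_product] at hp
    obtain ⟨⟨h1, h2⟩, hadj⟩ := hp
    rcases h _ h1 _ h2 hadj with ⟨a, b⟩ | ⟨a, b⟩ <;>
      simp [Finset.mem_union, Finset.mem_filter, a, b, hadj]
  exact le_trans (Finset.card_le_card hsub) (Finset.card_union_le _ _)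

end E2

section E2univ
variable {V : Type} [Fintype V] [DecidableEq V] (G : SimpleGraph V) [DecidableRel G.Adj]

lemma E2_univ : E2 G Finset.univ = 2 * G.edgeFinset.card := by
  classical
  rw [← SimpleGraph.sum_degrees_eq_twice_card_edges]
  unfold E2
  rw [Finset.card_eq_sum_card_fiberwise (f := Prod.fst) (t := Finset.univ)
    (fun p _ => Finset.mem_univ _)]
  refine Finset.sum_congr rfl fun v _ => ?_
  rw [← SimpleGraph.card_neighborFinset_eq_degree]
  apply Finset.card_bij (fun p _ => p.2)
  · intro p hp
    simp only [Finset.mem_filter, Finset.mem_product, Finset.mem_univ, true_and] at hp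
    obtain ⟨hadj, hfst⟩ := hp
    simp only [SimpleGraph.mem_neighborFinset]
    exact hfst ▸ hadj
  · intro p hp q hq h
    simp only [Finset.mem_filter, Finset.mem_product, Finset.mem_univ, true_and] at hp hq
    exact Prod.ext (hp.2.trans hq.2.symm) h
  · intro u hu
    simp only [SimpleGraph.mem_neighborFinset] at hu
    exact ⟨(v, u), by simp [hu], rfl⟩
end E2univ

lemma mader {V : Type} [Fintype V] [DecidableEq V] {G : SimpleGraph V} [DecidableRel G.Adj]
    (k : ℕ) (hk : 1 ≤ k) :
    ∀ n (t : Finset V), t.card = n → 2 * k ≤ t.card →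
      4 * k * t.card + 1 ≤ E2 G t + 4 * k * k →
      ∃ u : Finset V, KConnected (k + 1) (G.induce (↑u : Set V)) := by
  classical
  intro n
  induction n using Nat.strong_induction_on with
  | _ n IH =>
  intro t htn hc hE
  subst htn
  -- Step 1 : 2k+1 ≤ |t|
  have hc1 : 2 * k + 1 ≤ t.card := by
    rcases Nat.lt_or_ge (t.card) (2*k+1) with h | h
    · exfalso
      have hceq : t.card = 2 * k := by omega
      have hle := E2_le (G := G) t
      rw [hceq] at hle hE
      zify [show (1:ℕ) ≤ 2*k by omega] at hle hE
      nlinarith [hle, hE]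
    · exact h
  -- Step 2 : minimum degree or recurse
  by_cases hdeg : ∃ v ∈ t, (t.filter (G.Adj v)).card ≤ 2 * k
  · obtain ⟨v, hv, hdv⟩ := hdeg
    have hcerase : (t.erase v).card = t.card - 1 := Finset.card_erase_of_mem hv
    refine IH (t.card - 1) (by omega) (t.erase v) hcerase (by omega) ?_
    have h1 := E2_erase (G := G) t v
    have h3 : 4*k*t.card = 4*k*((t.erase v).card) + 4*k := by
      rw [hcerase]
      have : t.card - 1 + 1 = t.card := by omega
      calc 4*k*t.card = 4*k*((t.card - 1) + 1) := by rw [this]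
        _ = 4*k*(t.card-1) + 4*k := by ring
    linarith [h1, hE, h3, hdv]
  push_neg at hdeg
  -- Step 3 : connectivity or recurse
  by_cases hconn : KConnected (k+1) (G.induce (↑t : Set V))
  · exact ⟨t, hconn⟩
  have hcardt : Nat.card ↥(↑t : Set V) = t.card := by
    rw [Nat.card_coe_set_eq, Set.ncard_coe_finset]
  have hnotall : ¬ ∀ S : Set ↥(↑t:Set V), S.ncard < k+1 →
      ((G.induce (↑t:Set V)).induce Sᶜ).Connected := by
    intro hall; exact hconn ⟨by omega, hall⟩
  push_neg at hnotall
  obtain ⟨S, hScard, hSdisc⟩ := hnotall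
  have hSfin : S.Finite := Set.toFinite S
  -- a vertex outside S
  have hex : ∃ x : ↥(↑t:Set V), x ∈ Sᶜ := by
    by_contra h; push_neg at h
    have hsub : (Set.univ : Set ↥(↑t:Set V)) ⊆ S := by
      intro x _
      by_contra hx; exact (h x) hx
    have := Set.ncard_le_ncard hsub hSfin
    rw [Set.ncard_univ, hcardt] at this; omega
  obtain ⟨x0, hx0⟩ := hex
  rw [SimpleGraph.connected_iff] at hSdisc
  have hne : Nonempty ↥(Sᶜ) := ⟨⟨x0, hx0⟩⟩
  have hpre : ¬ ((G.induce (↑t:Set V)).induce Sᶜ).Preconnected := by tauto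
  unfold SimpleGraph.Preconnected at hpre
  push_neg at hpre
  obtain ⟨a, b, hab⟩ := hpre
  set H := (G.induce (↑t:Set V)).induce Sᶜ with hH
  -- predicates on V
  set inS : V → Prop := fun x => ∃ hx : x ∈ (↑t:Set V), (⟨x, hx⟩ : ↥(↑t:Set V)) ∈ S with hinS
  set inA : V → Prop := fun x => ∃ (hx : x ∈ (↑t:Set V)) (hs : (⟨x, hx⟩:↥(↑t:Set V)) ∈ Sᶜ),
      H.Reachable a ⟨⟨x, hx⟩, hs⟩ with hinA
  set tS := t.filter inS with htSdef
  set tA := t.filter inA with htAdef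
  set tB := t.filter (fun x => ¬ inS x ∧ ¬ inA x) with htBdef
  set t1 := tA ∪ tS with ht1def
  set t2 := tB ∪ tS with ht2def
  -- basic membership facts
  have hAnotS : ∀ x, inA x → ¬ inS x := by
    rintro x ⟨hx, hs, -⟩ ⟨hx', hS'⟩
    exact hs hS'
  have hstep : ∀ x y : V, inA x → y ∈ t → G.Adj x y → (inA y ∨ inS y) := by
    rintro x y ⟨hx, hxs, hreach⟩ hyt hadj
    have hyT : y ∈ (↑t:Set V) := Finset.mem_coe.mpr hyt
    by_cases hys : (⟨y, hyT⟩ : ↥(↑t:Set V)) ∈ S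
    · exact Or.inr ⟨hyT, hys⟩
    · left
      refine ⟨hyT, hys, hreach.trans (SimpleGraph.Adj.reachable ?_)⟩
      exact hadj
  -- a and b at the V level
  have haA : inA (a.1.1 : V) := by
    refine ⟨a.1.2, a.2, ?_⟩
    exact SimpleGraph.Reachable.refl a
  have haT : (a.1.1 : V) ∈ t := a.1.2
  have hbT : (b.1.1 : V) ∈ t := b.1.2
  have hbB : ¬ inS (b.1.1 : V) ∧ ¬ inA (b.1.1 : V) := by
    constructor
    · rintro ⟨hx, hS'⟩
      exact b.2 hS'
    · rintro ⟨hx, hs, hreach⟩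
      exact hab hreach
  have haMem : (a.1.1 : V) ∈ tA := Finset.mem_filter.mpr ⟨haT, haA⟩
  have hbMem : (b.1.1 : V) ∈ tB := Finset.mem_filter.mpr ⟨hbT, hbB⟩
  -- cardinality of tS
  have htS : tS.card ≤ k := by
    have hsub : tS ⊆ hSfin.toFinset.image (fun s : ↥(↑t:Set V) => (s : V)) := by
      intro x hx
      obtain ⟨hxt, hxS, hS'⟩ := Finset.mem_filter.mp hx
      exact Finset.mem_image.mpr ⟨⟨x, hxS⟩, hSfin.mem_toFinset.mpr hS', rfl⟩
    have h1 := Finset.card_le_card hsub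
    have h2 := Finset.card_image_le (s := hSfin.toFinset) (f := fun s : ↥(↑t:Set V) => (s : V))
    have h3 : S.ncard = hSfin.toFinset.card := Set.ncard_eq_toFinset_card S hSfin
    omega
  -- t is covered by t1 and t2, overlapping only in tS
  have hdisjAB : Disjoint tA tB := by
    rw [Finset.disjoint_left]
    intro x hxA hxB
    exact (Finset.mem_filter.mp hxB).2.2 (Finset.mem_filter.mp hxA).2
  have hdisjAS : Disjoint tA tS := by
    rw [Finset.disjoint_left]
    intro x hxA hxS
    exact hAnotS x (Finset.mem_filter.mp hxA).2 (Finset.mem_filter.mp hxS).2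
  have hdisjBS : Disjoint tB tS := by
    rw [Finset.disjoint_left]
    intro x hxB hxS
    exact (Finset.mem_filter.mp hxB).2.1 (Finset.mem_filter.mp hxS).2
  have hsumcards : tA.card + tB.card + tS.card ≤ t.card := by
    have hdisj2 : Disjoint (tA ∪ tB) tS := Finset.disjoint_union_left.mpr ⟨hdisjAS, hdisjBS⟩
    have hsub : (tA ∪ tB) ∪ tS ⊆ t := by
      intro x hx
      rcases Finset.mem_union.mp hx with hx | hx
      · rcases Finset.mem_union.mp hx with hx | hx
        · exact (Finset.mem_filter.mp hx).1
        · exact (Finset.mem_filter.mp hx).1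
      · exact (Finset.mem_filter.mp hx).1
    calc tA.card + tB.card + tS.card
        = (tA ∪ tB).card + tS.card := by rw [Finset.card_union_of_disjoint hdisjAB]
      _ = ((tA ∪ tB) ∪ tS).card := (Finset.card_union_of_disjoint hdisj2).symm
      _ ≤ t.card := Finset.card_le_card hsub
  have hcards : t1.card + t2.card ≤ t.card + k := by
    have h1 := Finset.card_union_le tA tS
    have h2 := Finset.card_union_le tB tS
    rw [← ht1def] at h1
    rw [← ht2def] at h2
    omega
  -- the split property for edges
  have hsplitprop : ∀ x ∈ t, ∀ y ∈ t, G.Adj x y →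
      (x ∈ t1 ∧ y ∈ t1) ∨ (x ∈ t2 ∧ y ∈ t2) := by
    intro x hx y hy hadj
    by_cases hxa : inA x
    · left
      refine ⟨Finset.mem_union_left _ (Finset.mem_filter.mpr ⟨hx, hxa⟩), ?_⟩
      rcases hstep x y hxa hy hadj with h | h
      · exact Finset.mem_union_left _ (Finset.mem_filter.mpr ⟨hy, h⟩)
      · exact Finset.mem_union_right _ (Finset.mem_filter.mpr ⟨hy, h⟩)
    by_cases hya : inA y
    · left
      refine ⟨?_, Finset.mem_union_left _ (Finset.mem_filter.mpr ⟨hy, hya⟩)⟩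
      rcases hstep y x hya hx hadj.symm with h | h
      · exact absurd h hxa
      · exact Finset.mem_union_right _ (Finset.mem_filter.mpr ⟨hx, h⟩)
    · right
      constructor
      · by_cases hxs : inS x
        · exact Finset.mem_union_right _ (Finset.mem_filter.mpr ⟨hx, hxs⟩)
        · exact Finset.mem_union_left _ (Finset.mem_filter.mpr ⟨hx, hxs, hxa⟩)
      · by_cases hys : inS y
        · exact Finset.mem_union_right _ (Finset.mem_filter.mpr ⟨hy, hys⟩)
        · exact Finset.mem_union_left _ (Finset.mem_filter.mpr ⟨hy, hys, hya⟩)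
  -- neighbourhood bounds : t1 and t2 are big
  have hnbrA : t.filter (G.Adj (a.1.1 : V)) ⊆ t1 := by
    intro y hy
    obtain ⟨hyt, hadj⟩ := Finset.mem_filter.mp hy
    rcases hstep _ y haA hyt hadj with h | h
    · exact Finset.mem_union_left _ (Finset.mem_filter.mpr ⟨hyt, h⟩)
    · exact Finset.mem_union_right _ (Finset.mem_filter.mpr ⟨hyt, h⟩)
  have hnbrB : t.filter (G.Adj (b.1.1 : V)) ⊆ t2 := by
    intro y hy
    obtain ⟨hyt, hadj⟩ := Finset.mem_filter.mp hy
    by_cases hys : inS y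
    · exact Finset.mem_union_right _ (Finset.mem_filter.mpr ⟨hyt, hys⟩)
    by_cases hya : inA y
    · exfalso
      rcases hstep y _ hya hbT hadj.symm with h | h
      · exact hbB.2 h
      · exact hbB.1 h
    · exact Finset.mem_union_left _ (Finset.mem_filter.mpr ⟨hyt, hys, hya⟩)
  have ht1big : 2 * k ≤ t1.card := by
    have := Finset.card_le_card hnbrA
    have := hdeg _ haT
    omega
  have ht2big : 2 * k ≤ t2.card := by
    have := Finset.card_le_card hnbrB
    have := hdeg _ hbT
    omega
  -- t1 and t2 are proper subsets
  have ht1small : t1.card < t.card := by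
    have hsub : t1 ⊆ t.erase (b.1.1 : V) := by
      intro x hx
      refine Finset.mem_erase.mpr ⟨?_, ?_⟩
      · rintro rfl
        rcases Finset.mem_union.mp hx with h | h
        · exact hbB.2 (Finset.mem_filter.mp h).2
        · exact hbB.1 (Finset.mem_filter.mp h).2
      · rcases Finset.mem_union.mp hx with h | h
        · exact (Finset.mem_filter.mp h).1
        · exact (Finset.mem_filter.mp h).1
    have := Finset.card_le_card hsub
    have := Finset.card_erase_of_mem hbT
    omega
  have ht2small : t2.card < t.card := by
    have hsub : t2 ⊆ t.erase (a.1.1 : V) := by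
      intro x hx
      refine Finset.mem_erase.mpr ⟨?_, ?_⟩
      · rintro rfl
        rcases Finset.mem_union.mp hx with h | h
        · exact (Finset.mem_filter.mp h).2.2 haA
        · exact hAnotS _ haA (Finset.mem_filter.mp h).2
      · rcases Finset.mem_union.mp hx with h | h
        · exact (Finset.mem_filter.mp h).1
        · exact (Finset.mem_filter.mp h).1
    have := Finset.card_le_card hsub
    have := Finset.card_erase_of_mem haT
    omega
  -- recurse or contradiction
  by_cases hQ1 : 4 * k * t1.card + 1 ≤ E2 G t1 + 4 * k * k
  · exact IH t1.card ht1small t1 rfl ht1big hQ1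
  by_cases hQ2 : 4 * k * t2.card + 1 ≤ E2 G t2 + 4 * k * k
  · exact IH t2.card ht2small t2 rfl ht2big hQ2
  exfalso
  push_neg at hQ1 hQ2
  have hQ1' : E2 G t1 + 4 * k * k ≤ 4 * k * t1.card := by omega
  have hQ2' : E2 G t2 + 4 * k * k ≤ 4 * k * t2.card := by omega
  have hsplit := E2_split (G := G) t t1 t2 hsplitprop
  have hmul : 4 * k * t1.card + 4 * k * t2.card ≤ 4 * k * t.card + 4 * k * k := by
    calc 4 * k * t1.card + 4 * k * t2.card = 4 * k * (t1.card + t2.card) := by ring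
      _ ≤ 4 * k * (t.card + k) := Nat.mul_le_mul_left _ hcards
      _ = 4 * k * t.card + 4 * k * k := by ring
  linarith [hE, hsplit, hQ1', hQ2', hmul]


/-- Assuming the Lovász–Yemini conjecture (every `d(d+1)`-connected
graph is rigid in `ℝ^d`) and its global-rigidity consequence (every
`(d(d+1)+1)`-connected graph is globally rigid in `ℝ^d`), every graph `G` satisfies
`grn G ≥ ⌊√(|E| / (6|V|))⌋`. -/
theorem stmt15 {V : Type} [Fintype V] (G : SimpleGraph V)
    (hLY : ∀ (W : Type) [Fintype W] (H : SimpleGraph W) (d : ℕ), 1 ≤ d →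
      KConnected (d * (d + 1)) H → Rigid d H)
    (hGR : ∀ (W : Type) [Fintype W] (H : SimpleGraph W) (d : ℕ), 1 ≤ d →
      KConnected (d * (d + 1) + 1) H → GloballyRigid d H) :
    ⌊Real.sqrt ((G.edgeSet.ncard : ℝ) / (6 * Fintype.card V))⌋₊ ≤ grn G := by
  classical
  set n := Fintype.card V with hn
  set m := G.edgeSet.ncard with hm
  set d := ⌊Real.sqrt ((m : ℝ) / (6 * n))⌋₊ with hd
  rcases Nat.eq_zero_or_pos d with hd0 | hdpos
  · exact hd0 ▸ Nat.zero_le _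
  have hnpos : 0 < n := by
    by_contra h
    have hn0 : n = 0 := by omega
    have : ((m : ℝ) / (6 * n)) = 0 := by rw [hn0]; simp
    rw [hd, this, Real.sqrt_zero] at hdpos
    simp at hdpos
  have hxnn : (0:ℝ) ≤ (m : ℝ) / (6 * n) := by positivity
  have hdle : (d : ℝ) ≤ Real.sqrt ((m : ℝ) / (6 * n)) := Nat.floor_le (Real.sqrt_nonneg _)
  have hsq : (d:ℝ)^2 ≤ (m : ℝ) / (6 * n) := by
    nlinarith [Real.sq_sqrt hxnn, Real.sqrt_nonneg ((m : ℝ) / (6 * n))]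
  have hkey : 6 * d^2 * n ≤ m := by
    have hpos : (0:ℝ) < 6 * n := by positivity
    have h2 : (d:ℝ)^2 * (6*n) ≤ m := (le_div_iff₀ hpos).mp hsq
    have h3 : ((6 * d^2 * n : ℕ) : ℝ) ≤ (m:ℝ) := by push_cast; nlinarith [h2]
    exact_mod_cast h3
  have hmeq : m = G.edgeFinset.card := by
    rw [hm, SimpleGraph.edgeFinset, Set.ncard_eq_toFinset_card']
  have hm2 : 2 * m ≤ n * (n - 1) := by
    have h := SimpleGraph.card_edgeFinset_le_card_choose_two (G := G)
    rw [← hn] at h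
    have hch : n.choose 2 = n * (n-1) / 2 := Nat.choose_two_right n
    have h2 : 2 * (n * (n-1) / 2) ≤ n * (n-1) := by
      have := Nat.div_mul_le_self (n * (n-1)) 2
      omega
    omega
  set k := d * (d + 1) with hkdef
  have hk1 : 1 ≤ k := Nat.mul_pos hdpos (by omega)
  have hdd : d ≤ d * d := Nat.le_mul_of_pos_left d hdpos
  have h12 : 12 * (d^2 * n) ≤ n * (n-1) := by
    have h2key : 12 * (d^2 * n) ≤ 2 * m := by linarith [hkey]
    linarith [h2key, hm2]
  have h12' : 12 * d^2 ≤ n - 1 := by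
    by_contra hcon
    push_neg at hcon
    have h5 : n * (n-1) < n * (12 * d^2) := Nat.mul_lt_mul_of_pos_left hcon hnpos
    nlinarith [h12, h5]
  have h2k : 2 * k ≤ n := by
    have hn1 : n - 1 + 1 = n := by omega
    have hkx : 2 * k = 2 * (d*d) + 2 * d := by rw [hkdef]; ring
    nlinarith [h12', hdd, hn1, hkx]
  have hhyp : 4 * k * (Finset.univ : Finset V).card + 1 ≤ E2 G Finset.univ + 4 * k * k := by
    rw [E2_univ, ← hmeq, Finset.card_univ, ← hn]
    have e2 : 0 < 4 * (d*d) * n := Nat.mul_pos (Nat.mul_pos (by omega) (Nat.mul_pos hdpos hdpos)) hnpos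
    have ex1 : 4 * k * n = 4 * (d*d) * n + 4 * d * n := by rw [hkdef]; ring
    have e1 : 4 * d * n ≤ 4 * (d*d) * n := by
      have := Nat.mul_le_mul (Nat.mul_le_mul (le_refl 4) hdd) (le_refl n)
      linarith [this]
    have e3 : (0:ℕ) ≤ 4 * k * k := Nat.zero_le _
    linarith [hkey, e1, e2, ex1, e3]
  obtain ⟨u, hK⟩ := mader k hk1 (Finset.univ : Finset V).card Finset.univ rfl
    (by rw [Finset.card_univ, ← hn]; exact h2k) hhyp
  have hGRu : GloballyRigid d (G.induce (↑u : Set V)) :=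
    hGR ↥(↑u : Set V) (G.induce (↑u : Set V)) d hdpos hK
  have hucard : k + 2 ≤ (↑u : Set V).ncard := by
    have := hK.1
    rwa [Nat.card_coe_set_eq] at this
  have hmem : d ∈ {d' : ℕ | ∃ (U : Set V) (H : SimpleGraph U),
      H ≤ G.induce U ∧ d' + 2 ≤ U.ncard ∧ GloballyRigid d' H} := by
    refine ⟨(↑u : Set V), G.induce (↑u : Set V), le_refl _, ?_, hGRu⟩
    have hdk : d ≤ k := Nat.le_mul_of_pos_right d (by omega)
    omega
  have hbdd : BddAbove {d' : ℕ | ∃ (U : Set V) (H : SimpleGraph U),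
      H ≤ G.induce U ∧ d' + 2 ≤ U.ncard ∧ GloballyRigid d' H} := by
    refine ⟨n, ?_⟩
    rintro d' ⟨U, H, -, hcard, -⟩
    have hU : U.ncard ≤ n := by
      have := Set.ncard_le_ncard (Set.subset_univ U) Set.finite_univ
      rwa [Set.ncard_univ, Nat.card_eq_fintype_card, ← hn] at this
    omega
  exact le_csSup hbdd hmem
end
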